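/- Let E be a real inner product space and let p > 1 be a real number. Define the map A : E → E by A(x) = ‖x‖^(p−2) · x for x ≠ 0 and A(0) = 0. Then for any two distinct vectors a, b ∈ E one has the strict monotonicity inequality ⟨A(a) − A(b), a − b⟩ > 0. -/

import Mathlib

open RealInnerProductSpace

/-- Strict monotonicity of the `p`-Laplacian flux map `A x = ‖x‖^(p-2) • x`
(with the convention `A 0 = 0`) on a real inner product space, for `p > 1`:
for any two distinct vectors `a ≠ b` one has `⟪A a - A b, a - b⟫ > 0`. -/
theorem pLaplacian_flux_strict_mono
    {E : Type*} [NormedAddCommGroup E] [InnerProductSpace ℝ E]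
    (p : ℝ) (hp : 1 < p)
    (A : E → E) (hA0 : A 0 = 0)
    (hA : ∀ x : E, x ≠ 0 → A x = (‖x‖ ^ (p - 2) : ℝ) • x)
    (a b : E) (hab : a ≠ b) :
    0 < ⟪A a - A b, a - b⟫ := by
  rcases eq_or_ne a 0 with ha | ha
  · subst ha
    have hb : b ≠ 0 := fun h => hab h.symm
    have hy : (0:ℝ) < ‖b‖ := norm_pos_iff.mpr hb
    rw [hA0, hA b hb]
    have : ⟪(0:E) - (‖b‖ ^ (p - 2) : ℝ) • b, (0:E) - b⟫ = ‖b‖ ^ (p-2) * (‖b‖ * ‖b‖) := by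
      simp [inner_sub_left, inner_sub_right, real_inner_smul_left,
        real_inner_self_eq_norm_mul_norm]
      exact Or.inl (sq _)
    rw [this]
    positivity
  rcases eq_or_ne b 0 with hb | hb
  · subst hb
    have hx : (0:ℝ) < ‖a‖ := norm_pos_iff.mpr ha
    rw [hA0, hA a ha]
    have : ⟪(‖a‖ ^ (p - 2) : ℝ) • a - (0:E), a - 0⟫ = ‖a‖ ^ (p-2) * (‖a‖ * ‖a‖) := by
      simp [real_inner_smul_left, real_inner_self_eq_norm_mul_norm]
      exact Or.inl (sq _)
    rw [this]
    positivity
  · have hx : (0:ℝ) < ‖a‖ := norm_pos_iff.mpr ha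
    have hy : (0:ℝ) < ‖b‖ := norm_pos_iff.mpr hb
    set x := ‖a‖ with hxdef
    set y := ‖b‖ with hydef
    have hs : (0:ℝ) < x ^ (p-2) := Real.rpow_pos_of_pos hx _
    have ht : (0:ℝ) < y ^ (p-2) := Real.rpow_pos_of_pos hy _
    rw [hA a ha, hA b hb]
    have key : ⟪(x ^ (p - 2) : ℝ) • a - (y ^ (p - 2) : ℝ) • b, a - b⟫
        = x ^ (p-2) * (x * x) + y ^ (p-2) * (y * y)
          - (x ^ (p-2) + y ^ (p-2)) * ⟪a, b⟫ := by
      simp [inner_sub_left, inner_sub_right, real_inner_smul_left,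
        real_inner_self_eq_norm_mul_norm, real_inner_comm b a]
      ring
    rw [key]
    rcases eq_or_ne x y with hxy | hxy
    · have hab' : (0:ℝ) < ‖a - b‖ := by
        rw [norm_pos_iff]; exact sub_ne_zero.mpr hab
      have hn : ‖a - b‖ * ‖a - b‖ = x * x - 2 * ⟪a, b⟫ + y * y := by
        have := real_inner_self_eq_norm_mul_norm (a - b)
        rw [inner_sub_left, inner_sub_right, inner_sub_right,
          real_inner_self_eq_norm_mul_norm, real_inner_self_eq_norm_mul_norm,
          real_inner_comm b a] at this
        rw [real_inner_comm a b] at this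
        linarith
      have : x ^ (p-2) * (x * x) + y ^ (p-2) * (y * y)
          - (x ^ (p-2) + y ^ (p-2)) * ⟪a, b⟫
          = x ^ (p-2) * (‖a - b‖ * ‖a - b‖) := by
        rw [hn, ← hxy]; ring
      rw [this]
      positivity
    · have hinner : ⟪a, b⟫ ≤ x * y := real_inner_le_norm a b
      have h1 : x ^ (p-2) * x = x ^ (p-1) := by
        rw [← Real.rpow_add_one hx.ne']; ring_nf
      have h2 : y ^ (p-2) * y = y ^ (p-1) := by
        rw [← Real.rpow_add_one hy.ne']; ring_nf
      have h3 : (0:ℝ) < (x ^ (p-1) - y ^ (p-1)) * (x - y) := by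
        rcases lt_or_gt_of_ne hxy with h | h
        · have := Real.rpow_lt_rpow hx.le h (by linarith : (0:ℝ) < p - 1)
          nlinarith
        · have := Real.rpow_lt_rpow hy.le h (by linarith : (0:ℝ) < p - 1)
          nlinarith
      nlinarith [mul_le_mul_of_nonneg_left hinner (add_pos hs ht).le, h1, h2, h3]
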